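/- Let G be a second-countable profinite group, μ the normalized Haar probability measure on G, T : G → G a quotient-preserving map, and let F ⊆ F(T) be a collection of open normal subgroups of G forming a base of neighborhoods of the identity, each element of which T factors through. Then T is measure-preserving and ergodic with respect to μ if and only if for every N ∈ F the induced map T_N : G/N → G/N is minimal, i.e. for all x, y ∈ G there exists k ≥ 0 such that π_N(T^k(x)) = π_N(y). -/

import Mathlib

open MeasureTheory Set Function Pointwise

/-- `T` factors through the quotient map `G → G/N`. -/
def MapFactorsThrough {G : Type*} [Group G] (T : G → G) (N : Subgroup G) : Prop :=
  ∀ x y : G, x⁻¹ * y ∈ N → (T x)⁻¹ * T y ∈ N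

/-- `T` is a quotient-preserving map: the open normal subgroups through whose quotient
maps `T` factors contain a base of neighborhoods of the identity. -/
def QuotientPreserving {G : Type*} [Group G] [TopologicalSpace G] (T : G → G) : Prop :=
  ∀ U ∈ nhds (1 : G), ∃ N : Subgroup G,
    N.Normal ∧ IsOpen (N : Set G) ∧ (N : Set G) ⊆ U ∧ MapFactorsThrough T N

namespace Stmt6Aux

variable {G : Type*} [Group G] {T : G → G} {N : Subgroup G}

def qmap (T : G → G) (N : Subgroup G) (h : MapFactorsThrough T N) : G ⧸ N → G ⧸ N :=
  Quotient.map' T fun a b hab =>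
    QuotientGroup.leftRel_apply.mpr (h a b (QuotientGroup.leftRel_apply.mp hab))

lemma qmap_mk (h : MapFactorsThrough T N) (x : G) :
    qmap T N h (x : G ⧸ N) = ((T x : G) : G ⧸ N) := rfl

lemma qmap_iterate (h : MapFactorsThrough T N) (k : ℕ) (x : G) :
    (qmap T N h)^[k] (x : G ⧸ N) = ((T^[k] x : G) : G ⧸ N) := by
  induction k with
  | zero => rfl
  | succ n ih =>
      rw [Function.iterate_succ_apply', ih, qmap_mk, Function.iterate_succ_apply']

lemma preimage_mk_preimage (h : MapFactorsThrough T N) (B : Set (G ⧸ N)) :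
    T ⁻¹' (QuotientGroup.mk ⁻¹' B) = QuotientGroup.mk ⁻¹' (qmap T N h ⁻¹' B) := rfl

lemma preimage_mk_singleton (x : G) :
    (QuotientGroup.mk ⁻¹' {(x : G ⧸ N)} : Set G) = x • (N : Set G) := by
  rw [← QuotientGroup.eq_class_eq_leftCoset]
  rfl

lemma qmap_surjective (h : MapFactorsThrough T N)
    (htr : ∀ x y : G, ∃ k, (T^[k] x)⁻¹ * y ∈ N) : Surjective (qmap T N h) := by
  intro b
  induction b using QuotientGroup.induction_on with
  | _ g =>
    obtain ⟨k, hk⟩ := htr (T g) g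
    refine ⟨((T^[k] g : G) : G ⧸ N), ?_⟩
    rw [qmap_mk]
    have h1 : T (T^[k] g) = T^[k] (T g) := by
      rw [← Function.iterate_succ_apply' T k g, Function.iterate_succ_apply]
    rw [h1]
    exact QuotientGroup.eq.mpr hk

lemma qmap_preimage_singleton (h : MapFactorsThrough T N)
    (hbij : Bijective (qmap T N h)) (b : G ⧸ N) :
    qmap T N h ⁻¹' {b} = {(Equiv.ofBijective _ hbij).symm b} := by
  ext a
  simp only [mem_preimage, mem_singleton_iff]
  constructor
  · intro ha
    exact hbij.injective (ha.trans (Equiv.ofBijective_apply_symm_apply _ hbij b).symm)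
  · intro ha
    rw [ha]
    exact Equiv.ofBijective_apply_symm_apply _ hbij b

section Top

variable [TopologicalSpace G] [IsTopologicalGroup G]

lemma isOpen_fiber (hNo : IsOpen (N : Set G)) (q : G ⧸ N) :
    IsOpen (QuotientGroup.mk ⁻¹' {q} : Set G) := by
  induction q using QuotientGroup.induction_on with
  | _ g =>
    rw [preimage_mk_singleton]
    exact hNo.smul g

lemma continuous_of_qp (hT : QuotientPreserving T) : Continuous T := by
  rw [continuous_def]
  intro U hU
  rw [isOpen_iff_mem_nhds]
  intro x hx
  have h1 : (fun a => T x * a) ⁻¹' U ∈ nhds (1 : G) := by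
    have hc : Continuous fun a : G => T x * a := continuous_const.mul continuous_id
    exact (hU.preimage hc).mem_nhds (by simpa using hx)
  obtain ⟨M, hMn, hMo, hMsub, hMf⟩ := hT _ h1
  have hsub : x • (M : Set G) ⊆ T ⁻¹' U := by
    intro y hy
    have hn : x⁻¹ * y ∈ M := (mem_leftCoset_iff x).mp hy
    have h2 := hMsub (hMf x y hn)
    simpa using h2
  exact Filter.mem_of_superset
    ((hMo.smul x).mem_nhds ⟨1, M.one_mem, mul_one x⟩) hsub

end Top

section Meas

variable [TopologicalSpace G] [IsTopologicalGroup G] [MeasurableSpace G] [BorelSpace G]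

lemma measure_fiber (μ : Measure G) [μ.IsMulLeftInvariant] (q : G ⧸ N) :
    μ (QuotientGroup.mk ⁻¹' {q}) = μ (N : Set G) := by
  induction q using QuotientGroup.induction_on with
  | _ g =>
    rw [preimage_mk_singleton]
    have : g • (N : Set G) = (fun h => g⁻¹ * h) ⁻¹' (N : Set G) := by
      ext y
      simp [mem_leftCoset_iff]
    rw [this, measure_preimage_mul]

lemma sum_fibers [Fintype (G ⧸ N)] (μ : Measure G) (hNo : IsOpen (N : Set G))
    (A : Set G) (hA : MeasurableSet A) :
    ∑ q : G ⧸ N, μ (A ∩ QuotientGroup.mk ⁻¹' {q}) = μ A := by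
  have hU : ⋃ q : G ⧸ N, A ∩ QuotientGroup.mk ⁻¹' {q} = A := by
    ext a
    simp
  have hdis : Pairwise (Disjoint on fun q : G ⧸ N => A ∩ QuotientGroup.mk ⁻¹' {q}) := by
    intro q q' hqq'
    simp only [Set.disjoint_left, onFun]
    rintro a ⟨-, ha⟩ ⟨-, ha'⟩
    exact hqq' (by rw [← ha, ← ha'])
  have hmeas : ∀ q : G ⧸ N, MeasurableSet (A ∩ QuotientGroup.mk ⁻¹' {q}) :=
    fun q => hA.inter (isOpen_fiber hNo q).measurableSet
  have h2 := measure_iUnion (μ := μ) hdis hmeas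
  rw [hU] at h2
  rw [h2, tsum_fintype]

end Meas

end Stmt6Aux
namespace Stmt6Aux

variable {G : Type*} [Group G] [TopologicalSpace G]

def piSys (T : G → G) : Set (Set G) :=
  {S | ∃ (N : Subgroup G) (x : G),
    N.Normal ∧ IsOpen (N : Set G) ∧ MapFactorsThrough T N ∧ S = x • (N : Set G)}

lemma isPiSystem_piSys (T : G → G) : IsPiSystem (piSys T) := by
  rintro s ⟨N, x, hNn, hNo, hNf, rfl⟩ t ⟨M, y, hMn, hMo, hMf, rfl⟩ hst
  obtain ⟨z, hzN, hzM⟩ := hst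
  refine ⟨N ⊓ M, z, ?_, ?_, ?_, ?_⟩
  · exact ⟨fun n hn g => ⟨hNn.conj_mem n hn.1 g, hMn.conj_mem n hn.2 g⟩⟩
  · exact hNo.inter hMo
  · exact fun a b hab => ⟨hNf a b hab.1, hMf a b hab.2⟩
  · have h1 : x • (N : Set G) = z • (N : Set G) :=
      (leftCoset_eq_iff N).mpr ((mem_leftCoset_iff x).mp hzN)
    have h2 : y • (M : Set G) = z • (M : Set G) :=
      (leftCoset_eq_iff M).mpr ((mem_leftCoset_iff y).mp hzM)
    rw [h1, h2, ← Set.smul_set_inter]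
    rfl

variable [IsTopologicalGroup G] [SecondCountableTopology G]
  [MeasurableSpace G] [BorelSpace G]

lemma generateFrom_piSys {T : G → G} (hT : QuotientPreserving T) :
    MeasurableSpace.generateFrom (piSys T) = ‹MeasurableSpace G› := by
  refine le_antisymm (MeasurableSpace.generateFrom_le ?_) ?_
  · rintro s ⟨N, x, hNn, hNo, hNf, rfl⟩
    exact (hNo.smul x).measurableSet
  · rw [BorelSpace.measurable_eq (α := G)]
    refine MeasurableSpace.generateFrom_le ?_
    rintro U hU
    show MeasurableSet[MeasurableSpace.generateFrom (piSys T)] U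
    have hex : ∀ u : U, ∃ V : Set G, V ∈ piSys T ∧ IsOpen V ∧ (u : G) ∈ V ∧ V ⊆ U := by
      rintro ⟨u, hu⟩
      have h1 : (fun a => u * a) ⁻¹' U ∈ nhds (1 : G) := by
        have hc : Continuous fun a : G => u * a := continuous_const.mul continuous_id
        exact (hU.preimage hc).mem_nhds (by simpa using hu)
      obtain ⟨N, hNn, hNo, hNsub, hNf⟩ := hT _ h1
      refine ⟨u • (N : Set G), ⟨N, u, hNn, hNo, hNf, rfl⟩, hNo.smul u,
        ⟨1, N.one_mem, mul_one u⟩, ?_⟩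
      rintro v ⟨n, hn, rfl⟩
      simpa using hNsub hn
    choose V hmem hopen humem hsub using hex
    have hUnion : ⋃ u, V u = U := by
      refine subset_antisymm (Set.iUnion_subset fun u => hsub u) fun a ha => ?_
      exact Set.mem_iUnion.mpr ⟨⟨a, ha⟩, humem ⟨a, ha⟩⟩
    obtain ⟨t, htc, hteq⟩ := TopologicalSpace.isOpen_iUnion_countable V hopen
    have hUeq : U = ⋃ u ∈ t, V u := by rw [hteq, hUnion]
    rw [hUeq]
    exact MeasurableSet.biUnion htc fun u _ =>
      MeasurableSpace.measurableSet_generateFrom (hmem u)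

end Stmt6Aux
namespace Stmt6Aux

lemma preimage_orbit {α : Type*} [Finite α] {f : α → α} (hbij : Function.Bijective f) (x : α) :
    f ⁻¹' (Set.range fun k : ℕ => f^[k] x) = Set.range fun k : ℕ => f^[k] x := by
  have hper : ∃ p : ℕ, 0 < p ∧ f^[p] x = x := by
    obtain ⟨i, j, hij, hfeq⟩ := Finite.exists_ne_map_eq_of_infinite fun k : ℕ => f^[k] x
    have key : ∀ i j : ℕ, i < j → f^[i] x = f^[j] x → ∃ p : ℕ, 0 < p ∧ f^[p] x = x := by
      intro i j hlt he
      refine ⟨j - i, by omega, (hbij.injective.iterate i) ?_⟩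
      rw [← Function.iterate_add_apply, show i + (j - i) = j by omega]
      exact he.symm
    rcases hij.lt_or_gt with h | h
    · exact key i j h hfeq
    · exact key j i h hfeq.symm
  obtain ⟨p, hp0, hpfix⟩ := hper
  ext a
  simp only [Set.mem_preimage, Set.mem_range]
  constructor
  · rintro ⟨k, hk⟩
    cases k with
    | zero =>
      refine ⟨p - 1, hbij.injective ?_⟩
      rw [← Function.iterate_succ_apply' f (p - 1), show (p - 1).succ = p by omega, hpfix]
      exact hk
    | succ n =>
      refine ⟨n, hbij.injective ?_⟩
      rw [← Function.iterate_succ_apply' f n]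
      exact hk
  · rintro ⟨k, rfl⟩
    exact ⟨k + 1, Function.iterate_succ_apply' f k x⟩

end Stmt6Aux

open Stmt6Aux Pointwise ENNReal in
theorem stmt6 {G : Type*} [Group G] [TopologicalSpace G] [IsTopologicalGroup G]
    [CompactSpace G] [T2Space G] [TotallyDisconnectedSpace G] [SecondCountableTopology G]
    [MeasurableSpace G] [BorelSpace G]
    (μ : Measure G) [μ.IsHaarMeasure] [IsProbabilityMeasure μ]
    (T : G → G) (hT : QuotientPreserving T)
    (𝓕 : Set (Subgroup G))
    (h𝓕 : ∀ N ∈ 𝓕, N.Normal ∧ IsOpen (N : Set G) ∧ MapFactorsThrough T N)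
    (hbase : ∀ U ∈ nhds (1 : G), ∃ N ∈ 𝓕, (N : Set G) ⊆ U) :
    ((∀ S : Set G, MeasurableSet S → μ (T ⁻¹' S) = μ S) ∧
      (∀ S : Set G, MeasurableSet S → T ⁻¹' S = S → μ S = 0 ∨ μ S = 1)) ↔
    (∀ N ∈ 𝓕, ∀ x y : G, ∃ k : ℕ, (T^[k] x)⁻¹ * y ∈ N) := by
  constructor
  · rintro ⟨hmp, herg⟩ N hN x y
    obtain ⟨hNn, hNo, hNf⟩ := h𝓕 N hN
    haveI : Finite (G ⧸ N) := N.quotient_finite_of_isOpen hNo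
    have hNpos : 0 < μ (N : Set G) := hNo.measure_pos μ ⟨1, N.one_mem⟩
    have hsurj : Function.Surjective (qmap T N hNf) := by
      intro b
      by_contra hb
      push_neg at hb
      have hemp : qmap T N hNf ⁻¹' {b} = ∅ := by
        ext a; simpa using hb a
      have h0 : T ⁻¹' (QuotientGroup.mk ⁻¹' {b}) = (∅ : Set G) := by
        rw [preimage_mk_preimage hNf, hemp]; simp
      have h1 := hmp (QuotientGroup.mk ⁻¹' {b}) (isOpen_fiber hNo b).measurableSet
      rw [h0, measure_empty, measure_fiber μ b] at h1
      exact hNpos.ne' h1.symm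
    have hbij : Function.Bijective (qmap T N hNf) :=
      Finite.surjective_iff_bijective.mp hsurj
    have hSopen : IsOpen (QuotientGroup.mk ⁻¹'
        (Set.range fun k : ℕ => (qmap T N hNf)^[k] (x : G ⧸ N)) : Set G) := by
      have hrw : (QuotientGroup.mk ⁻¹'
          (Set.range fun k : ℕ => (qmap T N hNf)^[k] (x : G ⧸ N)) : Set G) =
          ⋃ k : ℕ, QuotientGroup.mk ⁻¹' {(qmap T N hNf)^[k] (x : G ⧸ N)} := by
        ext a; simp [eq_comm]
      rw [hrw]
      exact isOpen_iUnion fun k => isOpen_fiber hNo _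
    have hSinv : T ⁻¹' (QuotientGroup.mk ⁻¹'
        (Set.range fun k : ℕ => (qmap T N hNf)^[k] (x : G ⧸ N))) =
        QuotientGroup.mk ⁻¹' (Set.range fun k : ℕ => (qmap T N hNf)^[k] (x : G ⧸ N)) := by
      rw [preimage_mk_preimage hNf, preimage_orbit hbij]
    have hfib_le : μ (N : Set G) ≤ μ (QuotientGroup.mk ⁻¹'
        (Set.range fun k : ℕ => (qmap T N hNf)^[k] (x : G ⧸ N))) := by
      rw [← measure_fiber μ ((x : G) : G ⧸ N)]
      refine measure_mono fun a ha => ?_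
      simp only [Set.mem_preimage, Set.mem_singleton_iff] at ha
      rw [Set.mem_preimage, ha]
      exact ⟨0, rfl⟩
    have hμO : μ (QuotientGroup.mk ⁻¹'
        (Set.range fun k : ℕ => (qmap T N hNf)^[k] (x : G ⧸ N))) = 1 := by
      rcases herg _ hSopen.measurableSet hSinv with h0 | h1
      · exact absurd (le_antisymm (h0 ▸ hfib_le) zero_le) hNpos.ne'
      · exact h1
    have hyO : ((y : G) : G ⧸ N) ∈
        Set.range fun k : ℕ => (qmap T N hNf)^[k] (x : G ⧸ N) := by
      by_contra hy
      have hsub : (QuotientGroup.mk ⁻¹' {((y : G) : G ⧸ N)} : Set G) ⊆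
          (QuotientGroup.mk ⁻¹'
            (Set.range fun k : ℕ => (qmap T N hNf)^[k] (x : G ⧸ N)))ᶜ := by
        intro a ha hamem
        simp only [Set.mem_preimage, Set.mem_singleton_iff] at ha
        rw [Set.mem_preimage, ha] at hamem
        exact hy hamem
      have hc : μ ((QuotientGroup.mk ⁻¹'
          (Set.range fun k : ℕ => (qmap T N hNf)^[k] (x : G ⧸ N)))ᶜ) = 0 := by
        rw [prob_compl_eq_one_sub hSopen.measurableSet, hμO, tsub_self]
      have hle := measure_mono (μ := μ) hsub
      rw [measure_fiber μ, hc] at hle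
      exact hNpos.ne' (le_antisymm hle zero_le)
    obtain ⟨k, hk⟩ := hyO
    refine ⟨k, ?_⟩
    have hk' : (qmap T N hNf)^[k] ((x : G) : G ⧸ N) = ((y : G) : G ⧸ N) := hk
    rw [qmap_iterate hNf k x] at hk'
    exact QuotientGroup.eq.mp hk'
  · intro hmin
    have htrans : ∀ N : Subgroup G, IsOpen (N : Set G) →
        ∀ x y : G, ∃ k, (T^[k] x)⁻¹ * y ∈ N := by
      intro N hNo x y
      obtain ⟨N', hN'F, hsubN⟩ := hbase N (hNo.mem_nhds N.one_mem)
      obtain ⟨k, hk⟩ := hmin N' hN'F x y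
      exact ⟨k, hsubN hk⟩
    have hTm : Measurable T := (continuous_of_qp hT).measurable
    have hkey : ∀ N : Subgroup G, IsOpen (N : Set G) → (hNf : MapFactorsThrough T N) →
        ∀ q : G ⧸ N, μ (T ⁻¹' (QuotientGroup.mk ⁻¹' {q})) = μ (N : Set G) := by
      intro N hNo hNf q
      haveI : Finite (G ⧸ N) := N.quotient_finite_of_isOpen hNo
      have hbij : Function.Bijective (qmap T N hNf) :=
        Finite.surjective_iff_bijective.mp (qmap_surjective hNf (htrans N hNo))
      rw [preimage_mk_preimage hNf, qmap_preimage_singleton hNf hbij, measure_fiber μ]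
    have hmap : μ.map T = μ := by
      haveI : IsProbabilityMeasure (μ.map T) := Measure.isProbabilityMeasure_map hTm.aemeasurable
      refine ext_of_generate_finite _ (generateFrom_piSys hT).symm (isPiSystem_piSys T) ?_ ?_
      · rintro s ⟨N, z, hNn, hNo, hNf, rfl⟩
        rw [← preimage_mk_singleton,
          Measure.map_apply hTm (isOpen_fiber hNo _).measurableSet,
          hkey N hNo hNf, measure_fiber μ]
      · simp
    have hmp : ∀ S : Set G, MeasurableSet S → μ (T ⁻¹' S) = μ S := by
      intro S hS
      rw [← Measure.map_apply hTm hS, hmap]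
    refine ⟨hmp, ?_⟩
    intro S hS hSinv
    have hconst : ∀ N : Subgroup G, IsOpen (N : Set G) → (hNf : MapFactorsThrough T N) →
        ∀ q : G ⧸ N, μ (S ∩ QuotientGroup.mk ⁻¹' {q}) = μ S * μ (N : Set G) := by
      intro N hNo hNf
      haveI : Finite (G ⧸ N) := N.quotient_finite_of_isOpen hNo
      haveI : Fintype (G ⧸ N) := Fintype.ofFinite _
      have hbij : Function.Bijective (qmap T N hNf) :=
        Finite.surjective_iff_bijective.mp (qmap_surjective hNf (htrans N hNo))
      have hstep : ∀ q : G ⧸ N, μ (S ∩ QuotientGroup.mk ⁻¹' {qmap T N hNf q}) =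
          μ (S ∩ QuotientGroup.mk ⁻¹' {q}) := by
        intro q
        have hfq : qmap T N hNf ⁻¹' {qmap T N hNf q} = {q} := by
          ext a
          simp only [Set.mem_preimage, Set.mem_singleton_iff]
          exact ⟨fun h => hbij.injective h, fun h => by rw [h]⟩
        have hpre : T ⁻¹' (S ∩ QuotientGroup.mk ⁻¹' {qmap T N hNf q}) =
            S ∩ QuotientGroup.mk ⁻¹' {q} := by
          rw [Set.preimage_inter, hSinv, preimage_mk_preimage hNf, hfq]
        have h2 := hmp (S ∩ QuotientGroup.mk ⁻¹' {qmap T N hNf q})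
          (hS.inter (isOpen_fiber hNo _).measurableSet)
        rw [hpre] at h2
        exact h2.symm
      have hiter : ∀ (k : ℕ) (q : G ⧸ N),
          μ (S ∩ QuotientGroup.mk ⁻¹' {(qmap T N hNf)^[k] q}) =
          μ (S ∩ QuotientGroup.mk ⁻¹' {q}) := by
        intro k
        induction k with
        | zero => intro q; rfl
        | succ n ih =>
          intro q
          rw [Function.iterate_succ_apply', hstep, ih]
      have hconstq : ∀ q q' : G ⧸ N,
          μ (S ∩ QuotientGroup.mk ⁻¹' {q}) = μ (S ∩ QuotientGroup.mk ⁻¹' {q'}) := by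
        intro q q'
        induction q using QuotientGroup.induction_on with
        | _ a =>
        induction q' using QuotientGroup.induction_on with
        | _ b =>
        obtain ⟨k, hk⟩ := htrans N hNo a b
        have hbk : (qmap T N hNf)^[k] ((a : G) : G ⧸ N) = ((b : G) : G ⧸ N) := by
          rw [qmap_iterate hNf]
          exact QuotientGroup.eq.mpr hk
        rw [← hbk, hiter]
      intro q
      have hsumS : (Fintype.card (G ⧸ N) : ℝ≥0∞) * μ (S ∩ QuotientGroup.mk ⁻¹' {q}) = μ S := by
        rw [← sum_fibers μ hNo S hS,
          show ∑ q' : G ⧸ N, μ (S ∩ QuotientGroup.mk ⁻¹' {q'}) =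
            ∑ _q' : G ⧸ N, μ (S ∩ QuotientGroup.mk ⁻¹' {q}) from
            Finset.sum_congr rfl fun q' _ => hconstq q' q,
          Finset.sum_const, Finset.card_univ, nsmul_eq_mul]
      have hsumN : (Fintype.card (G ⧸ N) : ℝ≥0∞) * μ (N : Set G) = 1 := by
        have h1 := sum_fibers μ hNo Set.univ MeasurableSet.univ
        rw [measure_univ] at h1
        rw [← h1,
          show ∑ q' : G ⧸ N, μ (Set.univ ∩ QuotientGroup.mk ⁻¹' {q'}) =
            ∑ _q' : G ⧸ N, μ (N : Set G) from
            Finset.sum_congr rfl fun q' _ => by rw [Set.univ_inter, measure_fiber μ],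
          Finset.sum_const, Finset.card_univ, nsmul_eq_mul]
      calc μ (S ∩ QuotientGroup.mk ⁻¹' {q})
          = μ (S ∩ QuotientGroup.mk ⁻¹' {q}) *
            ((Fintype.card (G ⧸ N) : ℝ≥0∞) * μ (N : Set G)) := by rw [hsumN, mul_one]
        _ = ((Fintype.card (G ⧸ N) : ℝ≥0∞) * μ (S ∩ QuotientGroup.mk ⁻¹' {q})) *
            μ (N : Set G) := by ring
        _ = μ S * μ (N : Set G) := by rw [hsumS]
    have hres : μ.restrict S = μ S • μ := by
      refine ext_of_generate_finite _ (generateFrom_piSys hT).symm (isPiSystem_piSys T) ?_ ?_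
      · rintro s ⟨N, z, hNn, hNo, hNf, rfl⟩
        rw [← preimage_mk_singleton,
          Measure.restrict_apply (isOpen_fiber hNo _).measurableSet,
          Set.inter_comm, hconst N hNo hNf]
        rw [Measure.smul_apply, smul_eq_mul, measure_fiber μ]
      · rw [Measure.restrict_apply MeasurableSet.univ, Set.univ_inter]
        simp
    have hSS : μ S = μ S * μ S := by
      have h1 : μ.restrict S S = (μ S • μ) S := by rw [hres]
      rw [Measure.restrict_apply hS, Set.inter_self] at h1
      simpa using h1
    rcases eq_or_ne (μ S) 0 with h0 | h0
    · exact Or.inl h0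
    · exact Or.inr ((ENNReal.mul_eq_left h0 (measure_ne_top μ S)).mp hSS.symm)
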